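/- McAfee's double auction is dominant-strategy truthful for sellers: for every seller with true cost c, every fixed profile of all buyers' bids and the other sellers' asks, and every alternative ask a′, the seller's utility (payment minus cost if she trades, 0 otherwise) under the McAfee outcome when she reports c is at least her utility under the McAfee outcome when she reports a′. -/

import Mathlib

open Classical Finset

/-- The `k`-th highest bid (1-indexed) of an arbitrary bid profile `b`,
obtained by sorting `b` in descending order with Mathlib's fixed
tie-breaking order (`0` out of range). -/
noncomputable def nthBidDesc {n : ℕ} (b : Fin n → ℝ) (k : ℕ) : ℝ :=
  if h : k - 1 < n then b (Tuple.sort (fun i => -b i) ⟨k - 1, h⟩) else 0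

/-- The `k`-th lowest ask (1-indexed) of an arbitrary ask profile `a`,
obtained by sorting `a` in ascending order with Mathlib's fixed
tie-breaking order (`0` out of range). -/
noncomputable def nthAskAsc {n : ℕ} (a : Fin n → ℝ) (k : ℕ) : ℝ :=
  if h : k - 1 < n then a (Tuple.sort a ⟨k - 1, h⟩) else 0

/-- The breakeven index: the largest `k ∈ {1, …, min V M}` such that the
`k`-th highest bid is at least the `k`-th lowest ask (`0` if none). -/
noncomputable def mcafeeK (V M : ℕ) (b : Fin V → ℝ) (a : Fin M → ℝ) : ℕ :=
  ((Finset.Icc 1 (min V M)).filter (fun k => nthAskAsc a k ≤ nthBidDesc b k)).sup id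

/-- The McAfee candidate price `p₀ = (b_{K+1} + a_{K+1})/2`. -/
noncomputable def mcafeeP0 (V M : ℕ) (b : Fin V → ℝ) (a : Fin M → ℝ) : ℝ :=
  (nthBidDesc b (mcafeeK V M b a + 1) + nthAskAsc a (mcafeeK V M b a + 1)) / 2

/-- Whether the threshold-price case of McAfee's auction applies:
`K ≥ 1`, `K < min V M` (so `p₀` is defined) and `a_K ≤ p₀ ≤ b_K`. -/
def mcafeeThreshold (V M : ℕ) (b : Fin V → ℝ) (a : Fin M → ℝ) : Prop :=
  1 ≤ mcafeeK V M b a ∧ mcafeeK V M b a + 1 ≤ min V M ∧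
    nthAskAsc a (mcafeeK V M b a) ≤ mcafeeP0 V M b a ∧
    mcafeeP0 V M b a ≤ nthBidDesc b (mcafeeK V M b a)

/-- Number of trades executed by McAfee's mechanism: `K` in the
threshold-price case, `K − 1` otherwise (trade reduction). -/
noncomputable def mcafeeQ (V M : ℕ) (b : Fin V → ℝ) (a : Fin M → ℝ) : ℕ :=
  if mcafeeThreshold V M b a then mcafeeK V M b a else mcafeeK V M b a - 1

/-- Price paid by each trading buyer: `p₀` in the threshold-price case,
`b_K` in the trade-reduction case. -/
noncomputable def mcafeeBuyerPrice (V M : ℕ) (b : Fin V → ℝ) (a : Fin M → ℝ) : ℝ :=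
  if mcafeeThreshold V M b a then mcafeeP0 V M b a
  else nthBidDesc b (mcafeeK V M b a)

/-- Price received by each trading seller: `p₀` in the threshold-price case,
`a_K` in the trade-reduction case. -/
noncomputable def mcafeeSellerPrice (V M : ℕ) (b : Fin V → ℝ) (a : Fin M → ℝ) : ℝ :=
  if mcafeeThreshold V M b a then mcafeeP0 V M b a
  else nthAskAsc a (mcafeeK V M b a)

/-- The (1-indexed) rank of buyer `i` in the descending order of bids,
using the fixed tie-breaking order of `Tuple.sort`. -/
noncomputable def buyerRank {V : ℕ} (b : Fin V → ℝ) (i : Fin V) : ℕ :=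
  ((Tuple.sort (fun j => -b j)).symm i : ℕ) + 1

/-- The (1-indexed) rank of seller `j` in the ascending order of asks,
using the fixed tie-breaking order of `Tuple.sort`. -/
noncomputable def sellerRank {M : ℕ} (a : Fin M → ℝ) (j : Fin M) : ℕ :=
  ((Tuple.sort a).symm j : ℕ) + 1

/-- Buyer `i` trades iff she is among the `q` highest-ranked buyers. -/
def buyerTrades (V M : ℕ) (b : Fin V → ℝ) (a : Fin M → ℝ) (i : Fin V) : Prop :=
  buyerRank b i ≤ mcafeeQ V M b a

/-- Seller `j` trades iff she is among the `q` lowest-ranked sellers. -/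
def sellerTrades (V M : ℕ) (b : Fin V → ℝ) (a : Fin M → ℝ) (j : Fin M) : Prop :=
  sellerRank a j ≤ mcafeeQ V M b a

/-- Utility of buyer `i` with true valuation `u` under McAfee's outcome for
the profile `(b, a)`: `u` minus the price paid if she trades, `0` otherwise. -/
noncomputable def buyerUtility (V M : ℕ) (b : Fin V → ℝ) (a : Fin M → ℝ)
    (i : Fin V) (u : ℝ) : ℝ :=
  if buyerTrades V M b a i then u - mcafeeBuyerPrice V M b a else 0

/-- Utility of seller `j` with true cost `c` under McAfee's outcome for the
profile `(b, a)`: payment received minus `c` if she trades, `0` otherwise. -/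
noncomputable def sellerUtility (V M : ℕ) (b : Fin V → ℝ) (a : Fin M → ℝ)
    (j : Fin M) (c : ℝ) : ℝ :=
  if sellerTrades V M b a j then mcafeeSellerPrice V M b a - c else 0

-- ===== auxiliary lemmas =====

lemma ask_le_iff {M : ℕ} (f : Fin M → ℝ) {k : ℕ} (hk1 : 1 ≤ k) (hkM : k ≤ M) (t : ℝ) :
    nthAskAsc f k ≤ t ↔ k ≤ Fintype.card {i // f i ≤ t} := by
  have hlt : k - 1 < M := by omega
  have h := Tuple.lt_card_le_iff_apply_le_of_monotone (f := f ∘ Tuple.sort f) (a := t)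
    (j := ⟨k - 1, hlt⟩) (Tuple.monotone_sort f)
  have hc : Fintype.card {m // (f ∘ Tuple.sort f) m ≤ t} = Fintype.card {i // f i ≤ t} :=
    Fintype.card_congr (Equiv.subtypeEquiv (Tuple.sort f) fun m => Iff.rfl)
  rw [← hc, Fintype.card_subtype]
  unfold nthAskAsc
  rw [dif_pos hlt]
  simp only [Function.comp_apply] at h ⊢
  rw [← h]
  show k - 1 < _ ↔ k ≤ _
  omega

lemma ask_mono {M : ℕ} (f : Fin M → ℝ) {k k' : ℕ} (hk1 : 1 ≤ k) (hkk' : k ≤ k')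
    (hk'M : k' ≤ M) : nthAskAsc f k ≤ nthAskAsc f k' := by
  rw [ask_le_iff f hk1 (hkk'.trans hk'M)]
  exact hkk'.trans ((ask_le_iff f (hk1.trans hkk') hk'M _).mp le_rfl)

lemma sellerRank_pos {M : ℕ} (f : Fin M → ℝ) (i : Fin M) : 1 ≤ sellerRank f i :=
  Nat.le_add_left 1 _

lemma sellerRank_le {M : ℕ} (f : Fin M → ℝ) (i : Fin M) : sellerRank f i ≤ M :=
  ((Tuple.sort f).symm i).isLt

lemma ask_rank {M : ℕ} (f : Fin M → ℝ) (i : Fin M) :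
    nthAskAsc f (sellerRank f i) = f i := by
  unfold nthAskAsc sellerRank
  have h : ((Tuple.sort f).symm i : ℕ) + 1 - 1 < M := by
    have := ((Tuple.sort f).symm i).isLt; omega
  rw [dif_pos h]
  have he : (⟨((Tuple.sort f).symm i : ℕ) + 1 - 1, h⟩ : Fin M) = (Tuple.sort f).symm i := by
    ext; simp
  rw [he, Equiv.apply_symm_apply]

/-- count of other sellers with ask at most `t` -/
noncomputable def cnt {M : ℕ} (a : Fin M → ℝ) (j : Fin M) (t : ℝ) : ℕ :=
  Fintype.card {i // i ≠ j ∧ a i ≤ t}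

lemma card_update {M : ℕ} (a : Fin M → ℝ) (j : Fin M) (z t : ℝ) :
    Fintype.card {i // Function.update a j z i ≤ t}
      = cnt a j t + (if z ≤ t then 1 else 0) := by
  unfold cnt
  rw [Fintype.card_subtype, Fintype.card_subtype]
  by_cases hz : z ≤ t
  · rw [if_pos hz]
    have he : (univ.filter fun i => Function.update a j z i ≤ t)
        = insert j (univ.filter fun i => i ≠ j ∧ a i ≤ t) := by
      ext i
      by_cases hij : i = j
      · subst hij; simp [Function.update_self, hz]
      · simp [Function.update_of_ne hij, hij]
    rw [he, Finset.card_insert_of_notMem (by simp)]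
  · rw [if_neg hz, add_zero]
    congr 1
    ext i
    by_cases hij : i = j
    · subst hij; simp [Function.update_self, hz]
    · simp [Function.update_of_ne hij, hij]

section UpdateLemmas
variable {M : ℕ} (a : Fin M → ℝ) (j : Fin M)

/-- (S): beyond the seller's own rank, order statistics are determined by others' counts. -/
lemma ask_update_le_iff (z t : ℝ) {k : ℕ}
    (hr : sellerRank (Function.update a j z) j < k) (hkM : k ≤ M) :
    nthAskAsc (Function.update a j z) k ≤ t ↔ k ≤ cnt a j t + 1 := by
  set f := Function.update a j z with hf
  have hr1 : 1 ≤ sellerRank f j := sellerRank_pos f j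
  have hk1 : 1 ≤ k := by omega
  have hfj : f j = z := Function.update_self j z a
  have hrankval : nthAskAsc f (sellerRank f j) = z := by rw [ask_rank, hfj]
  constructor
  · intro h
    by_cases hz : z ≤ t
    · have h2 := (ask_le_iff f hk1 hkM t).mp h
      rw [hf, card_update, if_pos hz] at h2
      exact h2
    · exfalso
      apply hz
      rw [← hrankval]
      exact le_trans (ask_mono f hr1 hr.le hkM) h
  · intro h
    by_cases hz : z ≤ t
    · rw [ask_le_iff f hk1 hkM t, hf, card_update, if_pos hz]
      exact h
    · exfalso
      have hnle : ¬ nthAskAsc f (sellerRank f j) ≤ t := by rw [hrankval]; exact hz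
      rw [ask_le_iff f hr1 (sellerRank_le f j) t] at hnle
      rw [hf, card_update, if_neg hz] at hnle
      rw [← hf] at hnle
      omega

/-- (A6) -/
lemma ask_update_le_any (x y : ℝ) {k : ℕ}
    (hr : sellerRank (Function.update a j x) j < k) (hkM : k ≤ M) :
    nthAskAsc (Function.update a j x) k ≤ nthAskAsc (Function.update a j y) k := by
  have hk1 : 1 ≤ k := by have := sellerRank_pos (Function.update a j x) j; omega
  rw [ask_update_le_iff a j x _ hr hkM]
  have h := (ask_le_iff (Function.update a j y) hk1 hkM
    (nthAskAsc (Function.update a j y) k)).mp le_rfl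
  rw [card_update] at h
  split_ifs at h <;> omega

/-- (A5) -/
lemma ask_update_eq (x y : ℝ) {k : ℕ}
    (hrx : sellerRank (Function.update a j x) j < k)
    (hry : sellerRank (Function.update a j y) j < k) (hkM : k ≤ M) :
    nthAskAsc (Function.update a j x) k = nthAskAsc (Function.update a j y) k :=
  le_antisymm (ask_update_le_any a j x y hrx hkM) (ask_update_le_any a j y x hry hkM)

/-- (A7) -/
lemma ask_update_le_max (x y : ℝ) {k : ℕ} (hk1 : 1 ≤ k) (hkM : k ≤ M) :
    nthAskAsc (Function.update a j y) k ≤ max (nthAskAsc (Function.update a j x) k) y := by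
  set t := max (nthAskAsc (Function.update a j x) k) y with ht
  rw [ask_le_iff _ hk1 hkM t, card_update, if_pos (le_max_right _ _)]
  have hx := (ask_le_iff (Function.update a j x) hk1 hkM t).mp (le_max_left _ _)
  rw [card_update] at hx
  split_ifs at hx <;> omega

/-- (A8) -/
lemma ask_update_mono (x y : ℝ) (hyx : y ≤ x) {k : ℕ} (hk1 : 1 ≤ k) (hkM : k ≤ M) :
    nthAskAsc (Function.update a j y) k ≤ nthAskAsc (Function.update a j x) k := by
  set t := nthAskAsc (Function.update a j x) k with ht
  rw [ask_le_iff _ hk1 hkM t, card_update]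
  have hx := (ask_le_iff (Function.update a j x) hk1 hkM t).mp le_rfl
  rw [card_update] at hx
  by_cases h1 : x ≤ t
  · rw [if_pos (hyx.trans h1)]; rw [if_pos h1] at hx; exact hx
  · rw [if_neg h1, add_zero] at hx; split_ifs <;> omega

/-- (A9) -/
lemma rank_le_cnt (z : ℝ) :
    sellerRank (Function.update a j z) j ≤ cnt a j z + 1 := by
  set f := Function.update a j z with hf
  have h : nthAskAsc f (sellerRank f j) ≤ z := by
    rw [ask_rank, hf, Function.update_self]
  rw [ask_le_iff f (sellerRank_pos f j) (sellerRank_le f j) z, hf, card_update,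
    if_pos le_rfl] at h
  exact h

/-- (A10) -/
lemma rank_update_mono (x y : ℝ) (hyx : y ≤ x) :
    sellerRank (Function.update a j y) j ≤ sellerRank (Function.update a j x) j := by
  rcases eq_or_lt_of_le hyx with h | h
  · subst h; exact le_rfl
  · have h1 : sellerRank (Function.update a j y) j ≤ cnt a j y + 1 := rank_le_cnt a j y
    have h2 : cnt a j y + 1 ≤ sellerRank (Function.update a j x) j := by
      by_contra hc
      push_neg at hc
      set f := Function.update a j x with hf
      have hle : nthAskAsc f (sellerRank f j) ≤ y := by
        rw [ask_le_iff f (sellerRank_pos f j) (sellerRank_le f j) y, hf, card_update,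
          if_neg (not_le.mpr h), ← hf]
        omega
      rw [ask_rank, hf, Function.update_self] at hle
      exact absurd hle (not_le.mpr h)
    omega

end UpdateLemmas

section MechLemmas
variable {V M : ℕ} (b : Fin V → ℝ) (f : Fin M → ℝ)

lemma sup_mem_of_pos {S : Finset ℕ} (h : 1 ≤ S.sup id) : S.sup id ∈ S := by
  rcases S.eq_empty_or_nonempty with rfl | hne
  · simp at h
  · obtain ⟨k, hk, hsup⟩ := Finset.exists_mem_eq_sup S hne id
    rw [hsup]; exact hk

lemma K_le_min : mcafeeK V M b f ≤ min V M := by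
  unfold mcafeeK
  exact Finset.sup_le fun k hk => (Finset.mem_Icc.mp (Finset.mem_filter.mp hk).1).2

lemma le_K {k : ℕ} (hk1 : 1 ≤ k) (hk2 : k ≤ min V M)
    (h : nthAskAsc f k ≤ nthBidDesc b k) : k ≤ mcafeeK V M b f := by
  unfold mcafeeK
  exact Finset.le_sup (f := id)
    (Finset.mem_filter.mpr ⟨Finset.mem_Icc.mpr ⟨hk1, hk2⟩, h⟩)

lemma K_spec (h : 1 ≤ mcafeeK V M b f) :
    nthAskAsc f (mcafeeK V M b f) ≤ nthBidDesc b (mcafeeK V M b f) := by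
  unfold mcafeeK at h ⊢
  have hmem := sup_mem_of_pos h
  exact (Finset.mem_filter.mp hmem).2

lemma K_lt_bid {k : ℕ} (hK : mcafeeK V M b f < k) (hk2 : k ≤ min V M) :
    nthBidDesc b k < nthAskAsc f k := by
  by_contra hc
  push_neg at hc
  exact absurd (le_K b f (by omega) hk2 hc) (by omega)

lemma Q_le_K : mcafeeQ V M b f ≤ mcafeeK V M b f := by
  unfold mcafeeQ; split_ifs <;> omega

end MechLemmas

section MainLemmas
variable {V M : ℕ} (b : Fin V → ℝ) (a : Fin M → ℝ) (j : Fin M)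

/-- Individual rationality: if the seller trades, the payment is at least her ask. -/
lemma seller_IR (z : ℝ) (hT : sellerTrades V M b (Function.update a j z) j) :
    z ≤ mcafeeSellerPrice V M b (Function.update a j z) := by
  have hr : sellerRank (Function.update a j z) j
      ≤ mcafeeQ V M b (Function.update a j z) := hT
  have hrpos := sellerRank_pos (Function.update a j z) j
  have hQK := Q_le_K b (Function.update a j z)
  have hK1 : 1 ≤ mcafeeK V M b (Function.update a j z) := by omega
  have hKM : mcafeeK V M b (Function.update a j z) ≤ M :=
    (K_le_min b _).trans (min_le_right _ _)
  have hz : nthAskAsc (Function.update a j z) (sellerRank (Function.update a j z) j)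
      = z := by rw [ask_rank, Function.update_self]
  unfold mcafeeSellerPrice
  by_cases hTh : mcafeeThreshold V M b (Function.update a j z)
  · rw [if_pos hTh]
    obtain ⟨_, _, h3, _⟩ := hTh
    calc z = _ := hz.symm
    _ ≤ nthAskAsc (Function.update a j z) (mcafeeK V M b (Function.update a j z)) :=
        ask_mono _ hrpos (hr.trans hQK) hKM
    _ ≤ _ := h3
  · rw [if_neg hTh]
    calc z = _ := hz.symm
    _ ≤ _ := ask_mono _ hrpos (hr.trans hQK) hKM

/-- Lowering a trading report: still trades, same price. -/
lemma trade_down (x y : ℝ) (hyx : y ≤ x)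
    (hT : sellerTrades V M b (Function.update a j x) j) :
    sellerTrades V M b (Function.update a j y) j ∧
      mcafeeSellerPrice V M b (Function.update a j y)
        = mcafeeSellerPrice V M b (Function.update a j x) := by
  have hr : sellerRank (Function.update a j x) j
      ≤ mcafeeQ V M b (Function.update a j x) := hT
  have hrpos := sellerRank_pos (Function.update a j x) j
  have hQK := Q_le_K b (Function.update a j x)
  have hrx : sellerRank (Function.update a j x) j ≤ mcafeeK V M b (Function.update a j x) :=
    hr.trans hQK
  have hK1 : 1 ≤ mcafeeK V M b (Function.update a j x) := by omega
  have hKmin := K_le_min b (Function.update a j x)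
  have hKM : mcafeeK V M b (Function.update a j x) ≤ M := hKmin.trans (min_le_right _ _)
  have hAKB := K_spec b (Function.update a j x) hK1
  have hry : sellerRank (Function.update a j y) j ≤ sellerRank (Function.update a j x) j :=
    rank_update_mono a j x y hyx
  -- equal breakeven index
  have hKy : mcafeeK V M b (Function.update a j y) = mcafeeK V M b (Function.update a j x) := by
    apply le_antisymm
    · by_contra hc
      push_neg at hc
      have hk2 := K_le_min b (Function.update a j y)
      have h1 := K_spec b (Function.update a j y) (by omega)
      have h2 := K_lt_bid b (Function.update a j x) hc hk2
      have h3 : nthAskAsc (Function.update a j x) (mcafeeK V M b (Function.update a j y))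
          ≤ nthAskAsc (Function.update a j y) (mcafeeK V M b (Function.update a j y)) :=
        ask_update_le_any a j x y (by omega) (hk2.trans (min_le_right _ _))
      linarith
    · exact le_K b _ hK1 hKmin ((ask_update_mono a j x y hyx hK1 hKM).trans hAKB)
  by_cases hTh : mcafeeThreshold V M b (Function.update a j x)
  · -- threshold case
    obtain ⟨h1, h2, h3, h4⟩ := hTh
    have hTh : mcafeeThreshold V M b (Function.update a j x) := ⟨h1, h2, h3, h4⟩
    have hK1M : mcafeeK V M b (Function.update a j x) + 1 ≤ M :=
      h2.trans (min_le_right _ _)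
    have hAK1eq : nthAskAsc (Function.update a j y) (mcafeeK V M b (Function.update a j x) + 1)
        = nthAskAsc (Function.update a j x) (mcafeeK V M b (Function.update a j x) + 1) :=
      ask_update_eq a j y x (by omega) (by omega) hK1M
    have hp0 : mcafeeP0 V M b (Function.update a j y) = mcafeeP0 V M b (Function.update a j x) := by
      unfold mcafeeP0
      rw [hKy, hAK1eq]
    have hTh' : mcafeeThreshold V M b (Function.update a j y) := by
      refine ⟨?_, ?_, ?_, ?_⟩
      · rw [hKy]; exact h1
      · rw [hKy]; exact h2
      · rw [hKy, hp0]
        exact (ask_update_mono a j x y hyx hK1 hKM).trans h3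
      · rw [hKy, hp0]; exact h4
    constructor
    · show sellerRank (Function.update a j y) j ≤ mcafeeQ V M b (Function.update a j y)
      unfold mcafeeQ
      rw [if_pos hTh', hKy]
      exact hry.trans hrx
    · unfold mcafeeSellerPrice
      rw [if_pos hTh', if_pos hTh, hp0]
  · -- trade-reduction case
    have hQx : mcafeeQ V M b (Function.update a j x)
        = mcafeeK V M b (Function.update a j x) - 1 := if_neg hTh
    have hrx1 : sellerRank (Function.update a j x) j
        ≤ mcafeeK V M b (Function.update a j x) - 1 := by rw [← hQx]; exact hr
    have hK2 : 2 ≤ mcafeeK V M b (Function.update a j x) := by omega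
    have hAKeq : nthAskAsc (Function.update a j y) (mcafeeK V M b (Function.update a j x))
        = nthAskAsc (Function.update a j x) (mcafeeK V M b (Function.update a j x)) :=
      ask_update_eq a j y x (by omega) (by omega) hKM
    have hThy : ¬ mcafeeThreshold V M b (Function.update a j y) := by
      intro h'
      obtain ⟨h1, h2, h3, h4⟩ := h'
      rw [hKy] at h1 h2 h3 h4
      have hK1M : mcafeeK V M b (Function.update a j x) + 1 ≤ M :=
        h2.trans (min_le_right _ _)
      have hAK1eq : nthAskAsc (Function.update a j y) (mcafeeK V M b (Function.update a j x) + 1)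
          = nthAskAsc (Function.update a j x) (mcafeeK V M b (Function.update a j x) + 1) :=
        ask_update_eq a j y x (by omega) (by omega) hK1M
      have hp0 : mcafeeP0 V M b (Function.update a j y)
          = mcafeeP0 V M b (Function.update a j x) := by
        unfold mcafeeP0
        rw [hKy, hAK1eq]
      rw [hp0] at h3 h4
      rw [hAKeq] at h3
      exact hTh ⟨h1, h2, h3, h4⟩
    constructor
    · show sellerRank (Function.update a j y) j ≤ mcafeeQ V M b (Function.update a j y)
      unfold mcafeeQ
      rw [if_neg hThy, hKy]
      omega
    · unfold mcafeeSellerPrice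
      rw [if_neg hThy, if_neg hTh, hKy, hAKeq]

end MainLemmas

section MainLemmas2
variable {V M : ℕ} (b : Fin V → ℝ) (a : Fin M → ℝ) (j : Fin M)

lemma K_update_eq (x y : ℝ)
    (hrx : sellerRank (Function.update a j x) j ≤ mcafeeK V M b (Function.update a j x))
    (hK1 : 1 ≤ mcafeeK V M b (Function.update a j x))
    (hAy : nthAskAsc (Function.update a j y) (mcafeeK V M b (Function.update a j x))
      ≤ nthBidDesc b (mcafeeK V M b (Function.update a j x))) :
    mcafeeK V M b (Function.update a j y) = mcafeeK V M b (Function.update a j x) := by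
  apply le_antisymm
  · by_contra hc
    push_neg at hc
    have hk2 := K_le_min b (Function.update a j y)
    have h1 := K_spec b (Function.update a j y) (by omega)
    have h2 := K_lt_bid b (Function.update a j x) hc hk2
    have h3 := ask_update_le_any a j x y (k := mcafeeK V M b (Function.update a j y))
      (by omega) (hk2.trans (min_le_right _ _))
    linarith
  · exact le_K b _ hK1 (K_le_min b _) hAy

/-- Any report strictly below the (trading) payment still trades. -/
lemma trade_below (x y : ℝ)
    (hT : sellerTrades V M b (Function.update a j x) j)
    (hy : y < mcafeeSellerPrice V M b (Function.update a j x)) :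
    sellerTrades V M b (Function.update a j y) j := by
  have hr : sellerRank (Function.update a j x) j
      ≤ mcafeeQ V M b (Function.update a j x) := hT
  have hrpos := sellerRank_pos (Function.update a j x) j
  have hQK := Q_le_K b (Function.update a j x)
  have hrx : sellerRank (Function.update a j x) j ≤ mcafeeK V M b (Function.update a j x) :=
    hr.trans hQK
  have hK1 : 1 ≤ mcafeeK V M b (Function.update a j x) := by omega
  have hKmin := K_le_min b (Function.update a j x)
  have hKM : mcafeeK V M b (Function.update a j x) ≤ M := hKmin.trans (min_le_right _ _)
  have hAKB := K_spec b (Function.update a j x) hK1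
  by_cases hTh : mcafeeThreshold V M b (Function.update a j x)
  · -- threshold case
    obtain ⟨h1, h2, h3, h4⟩ := id hTh
    have hK1M : mcafeeK V M b (Function.update a j x) + 1 ≤ M :=
      h2.trans (min_le_right _ _)
    have hBA : nthBidDesc b (mcafeeK V M b (Function.update a j x) + 1)
        < nthAskAsc (Function.update a j x) (mcafeeK V M b (Function.update a j x) + 1) :=
      K_lt_bid b (Function.update a j x) (by omega) h2
    have hyp0 : y < mcafeeP0 V M b (Function.update a j x) := by
      unfold mcafeeSellerPrice at hy
      rwa [if_pos hTh] at hy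
    have hp0lt : mcafeeP0 V M b (Function.update a j x)
        < nthAskAsc (Function.update a j x) (mcafeeK V M b (Function.update a j x) + 1) := by
      unfold mcafeeP0 at *
      linarith
    have hyA : y < nthAskAsc (Function.update a j x) (mcafeeK V M b (Function.update a j x) + 1) :=
      hyp0.trans hp0lt
    have hcnt : cnt a j y + 1 ≤ mcafeeK V M b (Function.update a j x) := by
      by_contra hc
      push_neg at hc
      have hle := (ask_update_le_iff a j x y (k := mcafeeK V M b (Function.update a j x) + 1)
        (by omega) hK1M).mpr (by omega)
      linarith
    have hrylow : sellerRank (Function.update a j y) j ≤ mcafeeK V M b (Function.update a j x) :=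
      (rank_le_cnt a j y).trans hcnt
    have hyB : y ≤ nthBidDesc b (mcafeeK V M b (Function.update a j x)) :=
      (hyp0.trans_le h4).le
    have hAyK : nthAskAsc (Function.update a j y) (mcafeeK V M b (Function.update a j x))
        ≤ nthBidDesc b (mcafeeK V M b (Function.update a j x)) :=
      (ask_update_le_max a j x y hK1 hKM).trans (max_le hAKB hyB)
    have hKy := K_update_eq b a j x y hrx hK1 hAyK
    have hAK1eqy : nthAskAsc (Function.update a j y) (mcafeeK V M b (Function.update a j x) + 1)
        = nthAskAsc (Function.update a j x) (mcafeeK V M b (Function.update a j x) + 1) :=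
      le_antisymm
        ((ask_update_le_max a j x y (by omega) hK1M).trans (max_le le_rfl hyA.le))
        (ask_update_le_any a j x y (by omega) hK1M)
    have hp0 : mcafeeP0 V M b (Function.update a j y)
        = mcafeeP0 V M b (Function.update a j x) := by
      unfold mcafeeP0
      rw [hKy, hAK1eqy]
    have hTh' : mcafeeThreshold V M b (Function.update a j y) := by
      refine ⟨?_, ?_, ?_, ?_⟩
      · rw [hKy]; exact h1
      · rw [hKy]; exact h2
      · rw [hKy, hp0]
        exact (ask_update_le_max a j x y hK1 hKM).trans (max_le h3 hyp0.le)
      · rw [hKy, hp0]; exact h4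
    show sellerRank (Function.update a j y) j ≤ mcafeeQ V M b (Function.update a j y)
    unfold mcafeeQ
    rw [if_pos hTh', hKy]
    exact hrylow
  · -- trade-reduction case
    have hQx : mcafeeQ V M b (Function.update a j x)
        = mcafeeK V M b (Function.update a j x) - 1 := if_neg hTh
    have hrx1 : sellerRank (Function.update a j x) j
        ≤ mcafeeK V M b (Function.update a j x) - 1 := by rw [← hQx]; exact hr
    have hK2 : 2 ≤ mcafeeK V M b (Function.update a j x) := by omega
    have hyA : y < nthAskAsc (Function.update a j x) (mcafeeK V M b (Function.update a j x)) := by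
      unfold mcafeeSellerPrice at hy
      rwa [if_neg hTh] at hy
    have hcnt : cnt a j y + 1 ≤ mcafeeK V M b (Function.update a j x) - 1 := by
      by_contra hc
      push_neg at hc
      have hle := (ask_update_le_iff a j x y (k := mcafeeK V M b (Function.update a j x))
        (by omega) hKM).mpr (by omega)
      linarith
    have hrylow : sellerRank (Function.update a j y) j
        ≤ mcafeeK V M b (Function.update a j x) - 1 :=
      (rank_le_cnt a j y).trans hcnt
    have hAyK : nthAskAsc (Function.update a j y) (mcafeeK V M b (Function.update a j x))
        ≤ nthBidDesc b (mcafeeK V M b (Function.update a j x)) :=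
      (ask_update_le_max a j x y hK1 hKM).trans (max_le hAKB (hyA.le.trans hAKB))
    have hKy := K_update_eq b a j x y hrx hK1 hAyK
    show sellerRank (Function.update a j y) j ≤ mcafeeQ V M b (Function.update a j y)
    unfold mcafeeQ
    split_ifs <;> omega

end MainLemmas2

/-- McAfee's double auction is dominant-strategy truthful for
sellers: for every seller `j` with true cost `c`, every fixed profile of all
buyers' bids `b` and the other sellers' asks (encoded in `a`), and every
alternative ask `a'`, the seller's utility when she reports her true cost `c`
is at least her utility when she reports `a'`. -/
theorem stmt_13 (V M : ℕ) (b : Fin V → ℝ) (a : Fin M → ℝ) (j : Fin M)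
    (c a' : ℝ) :
    sellerUtility V M b (Function.update a j a') j c ≤
      sellerUtility V M b (Function.update a j c) j c := by
  by_cases hTx : sellerTrades V M b (Function.update a j a') j
  · by_cases hTc : sellerTrades V M b (Function.update a j c) j
    · have hpe : mcafeeSellerPrice V M b (Function.update a j a')
          = mcafeeSellerPrice V M b (Function.update a j c) := by
        rcases le_total a' c with h | h
        · exact (trade_down b a j c a' h hTc).2
        · exact ((trade_down b a j a' c h hTx).2).symm
      unfold sellerUtility
      rw [if_pos hTx, if_pos hTc, hpe]
    · have hple : mcafeeSellerPrice V M b (Function.update a j a') ≤ c := by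
        by_contra hcon
        push_neg at hcon
        exact hTc (trade_below b a j a' c hTx hcon)
      unfold sellerUtility
      rw [if_pos hTx, if_neg hTc]
      linarith
  · unfold sellerUtility
    rw [if_neg hTx]
    by_cases hTc : sellerTrades V M b (Function.update a j c) j
    · rw [if_pos hTc]
      have := seller_IR b a j c hTc
      linarith
    · rw [if_neg hTc]
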